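/- For every b > 0 and θ ∈ ℝ, the 9×9 matrix ϱ_{b,θ} is positive semidefinite, where ϱ_{b,θ} is the Hermitian matrix with diagonal (p_θ, 1/b, b, b, p_θ, 1/b, 1/b, b, p_θ), entries ϱ(1,5) = ϱ(5,9) = -e^{iθ}, ϱ(1,9) = -e^{-iθ}, ϱ(2,4) = ϱ(6,8) = -e^{-iθ}, ϱ(3,7) = -e^{iθ} (indices 1-based), conjugate-symmetric entries, and all other entries zero. -/

import Mathlib

open Matrix Complex ComplexOrder

noncomputable def pTheta (θ : ℝ) : ℝ :=
  max (max (2 * Real.cos (θ - 2 * Real.pi / 3)) (2 * Real.cos θ))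
    (2 * Real.cos (θ + 2 * Real.pi / 3))

noncomputable def rho (b θ : ℝ) : Matrix (Fin 9) (Fin 9) ℂ :=
  let p : ℂ := (pTheta θ : ℂ)
  let e : ℂ := Complex.exp (θ * Complex.I)
  let f : ℂ := Complex.exp (-θ * Complex.I)
  !![p, 0, 0, 0, -e, 0, 0, 0, -f;
     0, 1/(b:ℂ), 0, -f, 0, 0, 0, 0, 0;
     0, 0, (b:ℂ), 0, 0, 0, -e, 0, 0;
     0, -e, 0, (b:ℂ), 0, 0, 0, 0, 0;
     -f, 0, 0, 0, p, 0, 0, 0, -e;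
     0, 0, 0, 0, 0, 1/(b:ℂ), 0, -f, 0;
     0, 0, -f, 0, 0, 0, 1/(b:ℂ), 0, 0;
     0, 0, 0, 0, 0, -e, 0, (b:ℂ), 0;
     -e, 0, 0, 0, -f, 0, 0, 0, p]

@[simp] lemma myCons_val_five {α : Type*} {m : ℕ} (y : α) (u : Fin (m+5) → α) :
    Matrix.vecCons y u 5 = vecHead (vecTail (vecTail (vecTail (vecTail u)))) := rfl
@[simp] lemma myCons_val_six {α : Type*} {m : ℕ} (y : α) (u : Fin (m+6) → α) :
    Matrix.vecCons y u 6 = vecHead (vecTail (vecTail (vecTail (vecTail (vecTail u))))) := rfl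
@[simp] lemma myCons_val_seven {α : Type*} {m : ℕ} (y : α) (u : Fin (m+7) → α) :
    Matrix.vecCons y u 7 = vecHead (vecTail (vecTail (vecTail (vecTail (vecTail (vecTail u)))))) := rfl
@[simp] lemma myCons_val_eight {α : Type*} {m : ℕ} (y : α) (u : Fin (m+8) → α) :
    Matrix.vecCons y u 8 = vecHead (vecTail (vecTail (vecTail (vecTail (vecTail (vecTail (vecTail u))))))) := rfl

theorem mySum9 {β : Type*} [AddCommMonoid β] (f : Fin 9 → β) :
    ∑ i, f i = f 0 + f 1 + f 2 + f 3 + f 4 + f 5 + f 6 + f 7 + f 8 := by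
  rw [Fin.sum_univ_castSucc, Fin.sum_univ_eight]; rfl

noncomputable def wC : ℂ := Complex.exp (((2*Real.pi/3 : ℝ) : ℂ) * Complex.I)

lemma wC_cube : wC ^ 3 = 1 := by
  rw [wC, ← Complex.exp_nat_mul]
  rw [show ((3:ℕ):ℂ) * (((2*Real.pi/3 : ℝ) : ℂ) * Complex.I) = 2 * (Real.pi:ℂ) * Complex.I by
    push_cast; ring]
  exact Complex.exp_two_pi_mul_I

lemma wC_ne_one : wC ≠ 1 := by
  have hre : wC.re = Real.cos (2*Real.pi/3) := Complex.exp_ofReal_mul_I_re _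
  have hv : Real.cos (2*Real.pi/3) = -(1/2) := by
    rw [show 2*Real.pi/3 = Real.pi - Real.pi/3 by ring, Real.cos_pi_sub, Real.cos_pi_div_three]
  intro h
  rw [h, Complex.one_re, hv] at hre
  norm_num at hre

lemma wC_rel : wC^2 + wC + 1 = 0 := by
  have h2 : (wC - 1) * (wC^2 + wC + 1) = 0 := by linear_combination wC_cube
  exact (mul_eq_zero.mp h2).resolve_left (sub_ne_zero.mpr wC_ne_one)

lemma wC_inv : wC⁻¹ = wC^2 := inv_eq_of_mul_eq_one_right (by linear_combination wC_cube)

lemma wC_exp_neg : Complex.exp (-(((2*Real.pi/3 : ℝ) : ℂ) * Complex.I)) = wC^2 := by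
  rw [Complex.exp_neg, show Complex.exp (((2*Real.pi/3 : ℝ) : ℂ) * Complex.I) = wC from rfl]
  exact wC_inv

set_option maxHeartbeats 2000000 in
theorem stmt4 (b θ : ℝ) (hb : 0 < b) : (rho b θ).PosSemidef := by
  have hbC : (b:ℂ) ≠ 0 := by exact_mod_cast hb.ne'
  have hef : Complex.exp ((θ:ℂ) * Complex.I) * Complex.exp (-((θ:ℂ) * Complex.I)) = 1 := by
    rw [← Complex.exp_add]; simp
  have hbc : (b:ℂ) * ((b:ℂ))⁻¹ = 1 := mul_inv_cancel₀ hbC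
  have hce : (starRingEnd ℂ) (Complex.exp ((θ:ℂ) * Complex.I))
      = Complex.exp (-((θ:ℂ) * Complex.I)) := by
    rw [← Complex.exp_conj]; congr 1
    rw [_root_.map_mul, Complex.conj_ofReal, Complex.conj_I]; ring
  have hcf : (starRingEnd ℂ) (Complex.exp (-((θ:ℂ) * Complex.I)))
      = Complex.exp ((θ:ℂ) * Complex.I) := by
    rw [← Complex.exp_conj]; congr 1
    rw [map_neg, _root_.map_mul, Complex.conj_ofReal, Complex.conj_I]; ring
  have hcw : (starRingEnd ℂ) wC = wC^2 := by
    conv_lhs => rw [wC]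
    rw [← Complex.exp_conj, _root_.map_mul, Complex.conj_ofReal, Complex.conj_I,
      show ((2*Real.pi/3:ℝ):ℂ) * -Complex.I = -(((2*Real.pi/3:ℝ):ℂ) * Complex.I) by ring]
    exact wC_exp_neg
  have hA1 : Complex.exp (((θ + 2*Real.pi/3 : ℝ):ℂ) * Complex.I)
      = Complex.exp ((θ:ℂ) * Complex.I) * wC := by
    rw [wC, ← Complex.exp_add]; congr 1; push_cast; ring
  have hB1 : Complex.exp (-(((θ + 2*Real.pi/3 : ℝ):ℂ) * Complex.I))
      = Complex.exp (-((θ:ℂ) * Complex.I)) * wC^2 := by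
    rw [← wC_exp_neg, ← Complex.exp_add]; congr 1; push_cast; ring
  have hA2 : Complex.exp (((θ - 2*Real.pi/3 : ℝ):ℂ) * Complex.I)
      = Complex.exp ((θ:ℂ) * Complex.I) * wC^2 := by
    rw [← wC_exp_neg, ← Complex.exp_add]; congr 1; push_cast; ring
  have hB2 : Complex.exp (-(((θ - 2*Real.pi/3 : ℝ):ℂ) * Complex.I))
      = Complex.exp (-((θ:ℂ) * Complex.I)) * wC := by
    rw [wC, ← Complex.exp_add]; congr 1; push_cast; ring
  have hc0 : 2 * ((Real.cos θ : ℝ) : ℂ)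
      = Complex.exp ((θ:ℂ) * Complex.I) + Complex.exp (-((θ:ℂ) * Complex.I)) := by
    rw [Complex.ofReal_cos, Complex.two_cos, neg_mul]
  have hc1 : 2 * ((Real.cos (θ + 2*Real.pi/3) : ℝ) : ℂ)
      = Complex.exp ((θ:ℂ) * Complex.I) * wC
        + Complex.exp (-((θ:ℂ) * Complex.I)) * wC^2 := by
    rw [Complex.ofReal_cos, Complex.two_cos, neg_mul, hA1, hB1]
  have hc2 : 2 * ((Real.cos (θ - 2*Real.pi/3) : ℝ) : ℂ)
      = Complex.exp ((θ:ℂ) * Complex.I) * wC^2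
        + Complex.exp (-((θ:ℂ) * Complex.I)) * wC := by
    rw [Complex.ofReal_cos, Complex.two_cos, neg_mul, hA2, hB2]
  have hw : wC^2 + wC + 1 = 0 := wC_rel
  refine Matrix.PosSemidef.of_dotProduct_mulVec_nonneg ?_ ?_
  · show (rho b θ)ᴴ = rho b θ
    ext i j
    fin_cases i <;> fin_cases j <;>
      simp [rho, Matrix.conjTranspose_apply, Complex.star_def, hce, hcf, one_div, map_inv₀,
        Complex.conj_ofReal, Matrix.vecHead, Matrix.vecTail, Function.comp]
  · intro x
    have hQ : star x ⬝ᵥ rho b θ *ᵥ x =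
        (((pTheta θ - 2*Real.cos θ)/3 : ℝ) : ℂ)
          * ((x 0 + x 4 + x 8) * (starRingEnd ℂ) (x 0 + x 4 + x 8))
        + (((pTheta θ - 2*Real.cos (θ + 2*Real.pi/3))/3 : ℝ) : ℂ)
          * ((x 0 + wC^2 * x 4 + wC * x 8) * (starRingEnd ℂ) (x 0 + wC^2 * x 4 + wC * x 8))
        + (((pTheta θ - 2*Real.cos (θ - 2*Real.pi/3))/3 : ℝ) : ℂ)
          * ((x 0 + wC * x 4 + wC^2 * x 8) * (starRingEnd ℂ) (x 0 + wC * x 4 + wC^2 * x 8))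
        + ((b⁻¹ : ℝ) : ℂ) *
          ((x 1 - (b:ℂ) * Complex.exp (-((θ:ℂ) * Complex.I)) * x 3)
              * (starRingEnd ℂ) (x 1 - (b:ℂ) * Complex.exp (-((θ:ℂ) * Complex.I)) * x 3)
            + (x 6 - (b:ℂ) * Complex.exp (-((θ:ℂ) * Complex.I)) * x 2)
              * (starRingEnd ℂ) (x 6 - (b:ℂ) * Complex.exp (-((θ:ℂ) * Complex.I)) * x 2)
            + (x 5 - (b:ℂ) * Complex.exp (-((θ:ℂ) * Complex.I)) * x 7)
              * (starRingEnd ℂ) (x 5 - (b:ℂ) * Complex.exp (-((θ:ℂ) * Complex.I)) * x 7)) := by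
      simp only [rho, dotProduct, Matrix.mulVec, mySum9, Pi.star_apply, Complex.star_def,
        Matrix.cons_val', Matrix.cons_val_zero, Matrix.cons_val_one, Matrix.cons_val_two,
        Matrix.cons_val_three, Matrix.cons_val_four, myCons_val_five, myCons_val_six,
        myCons_val_seven, myCons_val_eight, Matrix.head_cons, Matrix.tail_cons,
        Matrix.head_fin_const, Matrix.of_apply, Matrix.cons_val_fin_one, Matrix.empty_val',
        _root_.map_add, _root_.map_sub, _root_.map_mul, map_pow, map_inv₀, map_neg,
        _root_.map_one, map_ofNat, Complex.conj_ofReal, hce, hcf, hcw, one_div, neg_mul,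
        Complex.ofReal_div, Complex.ofReal_sub, Complex.ofReal_mul, Complex.ofReal_inv,
        Complex.ofReal_ofNat, Complex.ofReal_one]
      linear_combination ((-1:ℂ)*(b:ℂ)^2*((b:ℂ))⁻¹*(x 7)*((starRingEnd ℂ) (x 7)) + (-1:ℂ)*(b:ℂ)^2*((b:ℂ))⁻¹*(x 3)*((starRingEnd ℂ) (x 3)) + (-1:ℂ)*(b:ℂ)^2*((b:ℂ))⁻¹*(x 2)*((starRingEnd ℂ) (x 2))) * hef + ((1:ℂ)*(Complex.exp (-((θ:ℂ) * Complex.I)))*(x 7)*((starRingEnd ℂ) (x 5)) + (1:ℂ)*(Complex.exp (-((θ:ℂ) * Complex.I)))*(x 3)*((starRingEnd ℂ) (x 1)) + (1:ℂ)*(Complex.exp (-((θ:ℂ) * Complex.I)))*(x 2)*((starRingEnd ℂ) (x 6)) + (1:ℂ)*(Complex.exp ((θ:ℂ) * Complex.I))*(x 6)*((starRingEnd ℂ) (x 2)) + (1:ℂ)*(Complex.exp ((θ:ℂ) * Complex.I))*(x 5)*((starRingEnd ℂ) (x 7)) + (1:ℂ)*(Complex.exp ((θ:ℂ) * Complex.I))*(x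 1)*((starRingEnd ℂ) (x 3)) + (-1:ℂ)*(b:ℂ)*(x 7)*((starRingEnd ℂ) (x 7)) + (-1:ℂ)*(b:ℂ)*(x 3)*((starRingEnd ℂ) (x 3)) + (-1:ℂ)*(b:ℂ)*(x 2)*((starRingEnd ℂ) (x 2))) * hbc + (((-2:ℂ)/3)*((Real.cos (θ - 2*Real.pi/3) : ℝ) : ℂ)*(x 8)*((starRingEnd ℂ) (x 8)) + ((2:ℂ)/3)*((Real.cos (θ - 2*Real.pi/3) : ℝ) : ℂ)*(x 8)*((starRingEnd ℂ) (x 0)) + ((2:ℂ)/3)*((Real.cos (θ - 2*Real.pi/3) : ℝ) : ℂ)*(x 4)*((starRingEnd ℂ) (x 8)) + ((-2:ℂ)/3)*((Real.cos (θ - 2*Real.pi/3) : ℝ) : ℂ)*(x 4)*((starRingEnd ℂ) (x 4)) + ((2:ℂ)/3)*((Real.cos (θ - 2*Real.pi/3) : ℝ) : ℂ)*(x 0)*((starRingEnd ℂ) (x 4)) + ((-2:ℂ)/3)*((Real.cos (θ + 2*Real.pi/3) : ℝ) : ℂ)*(x 8)*((starRingEnd ℂ) (x 8)) + ((2:ℂ)/3)*((Real.cos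 (θ + 2*Real.pi/3) : ℝ) : ℂ)*(x 8)*((starRingEnd ℂ) (x 4)) + ((-2:ℂ)/3)*((Real.cos (θ + 2*Real.pi/3) : ℝ) : ℂ)*(x 4)*((starRingEnd ℂ) (x 4)) + ((2:ℂ)/3)*((Real.cos (θ + 2*Real.pi/3) : ℝ) : ℂ)*(x 4)*((starRingEnd ℂ) (x 0)) + ((2:ℂ)/3)*((Real.cos (θ + 2*Real.pi/3) : ℝ) : ℂ)*(x 0)*((starRingEnd ℂ) (x 8)) + ((2:ℂ)/3)*wC*((Real.cos (θ - 2*Real.pi/3) : ℝ) : ℂ)*(x 8)*((starRingEnd ℂ) (x 8)) + ((-2:ℂ)/3)*wC*((Real.cos (θ - 2*Real.pi/3) : ℝ) : ℂ)*(x 8)*((starRingEnd ℂ) (x 4)) + ((2:ℂ)/3)*wC*((Real.cos (θ - 2*Real.pi/3) : ℝ) : ℂ)*(x 4)*((starRingEnd ℂ) (x 4)) + ((-2:ℂ)/3)*wC*((Real.cos (θ - 2*Real.pi/3) : ℝ) : ℂ)*(x 0)*((starRingEnd ℂ) (x 8)) + ((2:ℂ)/3)*wC*((Real.cos (θ + 2*Real.pi/3)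 : ℝ) : ℂ)*(x 8)*((starRingEnd ℂ) (x 8)) + ((-2:ℂ)/3)*wC*((Real.cos (θ + 2*Real.pi/3) : ℝ) : ℂ)*(x 4)*((starRingEnd ℂ) (x 8)) + ((2:ℂ)/3)*wC*((Real.cos (θ + 2*Real.pi/3) : ℝ) : ℂ)*(x 4)*((starRingEnd ℂ) (x 4)) + ((-2:ℂ)/3)*wC*((Real.cos (θ + 2*Real.pi/3) : ℝ) : ℂ)*(x 0)*((starRingEnd ℂ) (x 4)) + ((2:ℂ)/3)*wC^2*((Real.cos (θ - 2*Real.pi/3) : ℝ) : ℂ)*(x 8)*((starRingEnd ℂ) (x 4)) + ((-2:ℂ)/3)*wC^2*((Real.cos (θ - 2*Real.pi/3) : ℝ) : ℂ)*(x 4)*((starRingEnd ℂ) (x 8)) + ((2:ℂ)/3)*wC^2*((Real.cos (θ - 2*Real.pi/3) : ℝ) : ℂ)*(x 0)*((starRingEnd ℂ) (x 8)) + ((-2:ℂ)/3)*wC^2*((Real.cos (θ + 2*Real.pi/3) : ℝ) : ℂ)*(x 8)*((starRingEnd ℂ) (x 4)) + ((2:ℂ)/3)*wC^2*((Real.cos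 (θ + 2*Real.pi/3) : ℝ) : ℂ)*(x 4)*((starRingEnd ℂ) (x 8)) + ((2:ℂ)/3)*wC^2*((Real.cos (θ + 2*Real.pi/3) : ℝ) : ℂ)*(x 0)*((starRingEnd ℂ) (x 4)) + ((-2:ℂ)/3)*wC^3*((Real.cos (θ - 2*Real.pi/3) : ℝ) : ℂ)*(x 8)*((starRingEnd ℂ) (x 8)) + ((2:ℂ)/3)*wC^3*((Real.cos (θ - 2*Real.pi/3) : ℝ) : ℂ)*(x 4)*((starRingEnd ℂ) (x 8)) + ((2:ℂ)/3)*wC^3*((Real.cos (θ + 2*Real.pi/3) : ℝ) : ℂ)*(x 8)*((starRingEnd ℂ) (x 4)) + ((-2:ℂ)/3)*wC^3*((Real.cos (θ + 2*Real.pi/3) : ℝ) : ℂ)*(x 4)*((starRingEnd ℂ) (x 4)) + ((2:ℂ)/3)*wC^4*((Real.cos (θ - 2*Real.pi/3) : ℝ) : ℂ)*(x 8)*((starRingEnd ℂ) (x 8)) + ((2:ℂ)/3)*wC^4*((Real.cos (θ + 2*Real.pi/3) : ℝ) : ℂ)*(x 4)*((starRingEnd ℂ) (x 4)) + ((1:ℂ)/3)*(Complex.exp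 (-((θ:ℂ) * Complex.I)))*(x 8)*((starRingEnd ℂ) (x 8)) + ((1:ℂ)/3)*(Complex.exp (-((θ:ℂ) * Complex.I)))*(x 8)*((starRingEnd ℂ) (x 4)) + ((-2:ℂ)/3)*(Complex.exp (-((θ:ℂ) * Complex.I)))*(x 8)*((starRingEnd ℂ) (x 0)) + ((-2:ℂ)/3)*(Complex.exp (-((θ:ℂ) * Complex.I)))*(x 4)*((starRingEnd ℂ) (x 8)) + ((1:ℂ)/3)*(Complex.exp (-((θ:ℂ) * Complex.I)))*(x 4)*((starRingEnd ℂ) (x 4)) + ((1:ℂ)/3)*(Complex.exp (-((θ:ℂ) * Complex.I)))*(x 4)*((starRingEnd ℂ) (x 0)) + ((1:ℂ)/3)*(Complex.exp (-((θ:ℂ) * Complex.I)))*(x 0)*((starRingEnd ℂ) (x 8)) + ((-2:ℂ)/3)*(Complex.exp (-((θ:ℂ) * Complex.I)))*(x 0)*((starRingEnd ℂ) (x 4)) + ((1:ℂ)/3)*(Complex.exp (-((θ:ℂ) * Complex.I)))*(x 0)*((starRingEnd ℂ) (x 0)) + ((-1:ℂ)/3)*(Complex.exp (-((θ:ℂ)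 * Complex.I)))*wC*(x 8)*((starRingEnd ℂ) (x 4)) + ((1:ℂ)/3)*(Complex.exp (-((θ:ℂ) * Complex.I)))*wC*(x 8)*((starRingEnd ℂ) (x 0)) + ((1:ℂ)/3)*(Complex.exp (-((θ:ℂ) * Complex.I)))*wC*(x 4)*((starRingEnd ℂ) (x 8)) + ((-1:ℂ)/3)*(Complex.exp (-((θ:ℂ) * Complex.I)))*wC*(x 4)*((starRingEnd ℂ) (x 0)) + ((-1:ℂ)/3)*(Complex.exp (-((θ:ℂ) * Complex.I)))*wC*(x 0)*((starRingEnd ℂ) (x 8)) + ((1:ℂ)/3)*(Complex.exp (-((θ:ℂ) * Complex.I)))*wC*(x 0)*((starRingEnd ℂ) (x 4)) + ((1:ℂ)/3)*(Complex.exp ((θ:ℂ) * Complex.I))*(x 8)*((starRingEnd ℂ) (x 8)) + ((-2:ℂ)/3)*(Complex.exp ((θ:ℂ) * Complex.I))*(x 8)*((starRingEnd ℂ) (x 4)) + ((1:ℂ)/3)*(Complex.exp ((θ:ℂ) * Complex.I))*(x 8)*((starRingEnd ℂ) (x 0)) + ((1:ℂ)/3)*(Complex.exp ((θ:ℂ)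 * Complex.I))*(x 4)*((starRingEnd ℂ) (x 8)) + ((1:ℂ)/3)*(Complex.exp ((θ:ℂ) * Complex.I))*(x 4)*((starRingEnd ℂ) (x 4)) + ((-2:ℂ)/3)*(Complex.exp ((θ:ℂ) * Complex.I))*(x 4)*((starRingEnd ℂ) (x 0)) + ((-2:ℂ)/3)*(Complex.exp ((θ:ℂ) * Complex.I))*(x 0)*((starRingEnd ℂ) (x 8)) + ((1:ℂ)/3)*(Complex.exp ((θ:ℂ) * Complex.I))*(x 0)*((starRingEnd ℂ) (x 4)) + ((1:ℂ)/3)*(Complex.exp ((θ:ℂ) * Complex.I))*(x 0)*((starRingEnd ℂ) (x 0)) + ((1:ℂ)/3)*(Complex.exp ((θ:ℂ) * Complex.I))*wC*(x 8)*((starRingEnd ℂ) (x 4)) + ((-1:ℂ)/3)*(Complex.exp ((θ:ℂ) * Complex.I))*wC*(x 8)*((starRingEnd ℂ) (x 0)) + ((-1:ℂ)/3)*(Complex.exp ((θ:ℂ) * Complex.I))*wC*(x 4)*((starRingEnd ℂ) (x 8)) + ((1:ℂ)/3)*(Complex.exp ((θ:ℂ) * Complex.I))*wC*(x 4)*((starRingEnd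 ℂ) (x 0)) + ((1:ℂ)/3)*(Complex.exp ((θ:ℂ) * Complex.I))*wC*(x 0)*((starRingEnd ℂ) (x 8)) + ((-1:ℂ)/3)*(Complex.exp ((θ:ℂ) * Complex.I))*wC*(x 0)*((starRingEnd ℂ) (x 4)) + ((2:ℂ)/3)*((pTheta θ : ℝ) : ℂ)*(x 8)*((starRingEnd ℂ) (x 8)) + ((-1:ℂ)/3)*((pTheta θ : ℝ) : ℂ)*(x 8)*((starRingEnd ℂ) (x 4)) + ((-1:ℂ)/3)*((pTheta θ : ℝ) : ℂ)*(x 8)*((starRingEnd ℂ) (x 0)) + ((-1:ℂ)/3)*((pTheta θ : ℝ) : ℂ)*(x 4)*((starRingEnd ℂ) (x 8)) + ((2:ℂ)/3)*((pTheta θ : ℝ) : ℂ)*(x 4)*((starRingEnd ℂ) (x 4)) + ((-1:ℂ)/3)*((pTheta θ : ℝ) : ℂ)*(x 4)*((starRingEnd ℂ) (x 0)) + ((-1:ℂ)/3)*((pTheta θ : ℝ) : ℂ)*(x 0)*((starRingEnd ℂ) (x 8)) + ((-1:ℂ)/3)*((pTheta θ : ℝ) : ℂ)*(x 0)*((starRingEnd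 ℂ) (x 4)) + ((-2:ℂ)/3)*((pTheta θ : ℝ) : ℂ)*wC*(x 8)*((starRingEnd ℂ) (x 8)) + ((1:ℂ)/3)*((pTheta θ : ℝ) : ℂ)*wC*(x 8)*((starRingEnd ℂ) (x 4)) + ((1:ℂ)/3)*((pTheta θ : ℝ) : ℂ)*wC*(x 4)*((starRingEnd ℂ) (x 8)) + ((-2:ℂ)/3)*((pTheta θ : ℝ) : ℂ)*wC*(x 4)*((starRingEnd ℂ) (x 4)) + ((1:ℂ)/3)*((pTheta θ : ℝ) : ℂ)*wC*(x 0)*((starRingEnd ℂ) (x 8)) + ((1:ℂ)/3)*((pTheta θ : ℝ) : ℂ)*wC*(x 0)*((starRingEnd ℂ) (x 4)) + ((-1:ℂ)/3)*((pTheta θ : ℝ) : ℂ)*wC^2*(x 0)*((starRingEnd ℂ) (x 8)) + ((-1:ℂ)/3)*((pTheta θ : ℝ) : ℂ)*wC^2*(x 0)*((starRingEnd ℂ) (x 4)) + ((1:ℂ)/3)*((pTheta θ : ℝ) : ℂ)*wC^3*(x 8)*((starRingEnd ℂ) (x 8)) + ((-1:ℂ)/3)*((pTheta θ : ℝ) :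 ℂ)*wC^3*(x 8)*((starRingEnd ℂ) (x 4)) + ((-1:ℂ)/3)*((pTheta θ : ℝ) : ℂ)*wC^3*(x 4)*((starRingEnd ℂ) (x 8)) + ((1:ℂ)/3)*((pTheta θ : ℝ) : ℂ)*wC^3*(x 4)*((starRingEnd ℂ) (x 4)) + ((-1:ℂ)/3)*((pTheta θ : ℝ) : ℂ)*wC^4*(x 8)*((starRingEnd ℂ) (x 8)) + ((-1:ℂ)/3)*((pTheta θ : ℝ) : ℂ)*wC^4*(x 4)*((starRingEnd ℂ) (x 4))) * hw + (((1:ℂ)/3)*(x 8)*((starRingEnd ℂ) (x 8)) + ((1:ℂ)/3)*(x 8)*((starRingEnd ℂ) (x 4)) + ((1:ℂ)/3)*(x 8)*((starRingEnd ℂ) (x 0)) + ((1:ℂ)/3)*(x 4)*((starRingEnd ℂ) (x 8)) + ((1:ℂ)/3)*(x 4)*((starRingEnd ℂ) (x 4)) + ((1:ℂ)/3)*(x 4)*((starRingEnd ℂ) (x 0)) + ((1:ℂ)/3)*(x 0)*((starRingEnd ℂ) (x 8)) + ((1:ℂ)/3)*(x 0)*((starRingEnd ℂ) (x 4)) + ((1:ℂ)/3)*(x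 0)*((starRingEnd ℂ) (x 0))) * hc0 + (((1:ℂ)/3)*(x 8)*((starRingEnd ℂ) (x 8)) + ((-1:ℂ)/3)*(x 8)*((starRingEnd ℂ) (x 4)) + ((1:ℂ)/3)*(x 4)*((starRingEnd ℂ) (x 4)) + ((-1:ℂ)/3)*(x 4)*((starRingEnd ℂ) (x 0)) + ((-1:ℂ)/3)*(x 0)*((starRingEnd ℂ) (x 8)) + ((1:ℂ)/3)*(x 0)*((starRingEnd ℂ) (x 0)) + ((-1:ℂ)/3)*wC*(x 8)*((starRingEnd ℂ) (x 4)) + ((1:ℂ)/3)*wC*(x 8)*((starRingEnd ℂ) (x 0)) + ((1:ℂ)/3)*wC*(x 4)*((starRingEnd ℂ) (x 8)) + ((-1:ℂ)/3)*wC*(x 4)*((starRingEnd ℂ) (x 0)) + ((-1:ℂ)/3)*wC*(x 0)*((starRingEnd ℂ) (x 8)) + ((1:ℂ)/3)*wC*(x 0)*((starRingEnd ℂ) (x 4))) * hc1 + (((1:ℂ)/3)*(x 8)*((starRingEnd ℂ) (x 8)) + ((-1:ℂ)/3)*(x 8)*((starRingEnd ℂ) (x 0)) + ((-1:ℂ)/3)*(x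 4)*((starRingEnd ℂ) (x 8)) + ((1:ℂ)/3)*(x 4)*((starRingEnd ℂ) (x 4)) + ((-1:ℂ)/3)*(x 0)*((starRingEnd ℂ) (x 4)) + ((1:ℂ)/3)*(x 0)*((starRingEnd ℂ) (x 0)) + ((1:ℂ)/3)*wC*(x 8)*((starRingEnd ℂ) (x 4)) + ((-1:ℂ)/3)*wC*(x 8)*((starRingEnd ℂ) (x 0)) + ((-1:ℂ)/3)*wC*(x 4)*((starRingEnd ℂ) (x 8)) + ((1:ℂ)/3)*wC*(x 4)*((starRingEnd ℂ) (x 0)) + ((1:ℂ)/3)*wC*(x 0)*((starRingEnd ℂ) (x 8)) + ((-1:ℂ)/3)*wC*(x 0)*((starRingEnd ℂ) (x 4))) * hc2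
    rw [hQ]
    have hp0 : 0 ≤ (pTheta θ - 2*Real.cos θ)/3 := by
      have : 2*Real.cos θ ≤ pTheta θ := by
        unfold pTheta; exact (le_max_right _ _).trans (le_max_left _ _)
      linarith
    have hp1 : 0 ≤ (pTheta θ - 2*Real.cos (θ + 2*Real.pi/3))/3 := by
      have : 2*Real.cos (θ + 2*Real.pi/3) ≤ pTheta θ := by
        unfold pTheta
        exact le_max_right _ _
      linarith
    have hp2 : 0 ≤ (pTheta θ - 2*Real.cos (θ - 2*Real.pi/3))/3 := by
      have : 2*Real.cos (θ - 2*Real.pi/3) ≤ pTheta θ := by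
        unfold pTheta
        refine le_trans (le_of_eq ?_) ((le_max_left _ _).trans (le_max_left _ _))
        ring_nf
      linarith
    have h0 : ∀ (r : ℝ) (z : ℂ), 0 ≤ r → 0 ≤ (r : ℂ) * (z * (starRingEnd ℂ) z) := by
      intro r z hr
      rw [Complex.mul_conj, ← Complex.ofReal_mul]
      exact Complex.zero_le_real.mpr (mul_nonneg hr (Complex.normSq_nonneg _))
    have hB : 0 ≤ ((b⁻¹ : ℝ) : ℂ) *
          ((x 1 - (b:ℂ) * Complex.exp (-((θ:ℂ) * Complex.I)) * x 3)
              * (starRingEnd ℂ) (x 1 - (b:ℂ) * Complex.exp (-((θ:ℂ) * Complex.I)) * x 3)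
            + (x 6 - (b:ℂ) * Complex.exp (-((θ:ℂ) * Complex.I)) * x 2)
              * (starRingEnd ℂ) (x 6 - (b:ℂ) * Complex.exp (-((θ:ℂ) * Complex.I)) * x 2)
            + (x 5 - (b:ℂ) * Complex.exp (-((θ:ℂ) * Complex.I)) * x 7)
              * (starRingEnd ℂ) (x 5 - (b:ℂ) * Complex.exp (-((θ:ℂ) * Complex.I)) * x 7)) := by
      rw [Complex.mul_conj, Complex.mul_conj, Complex.mul_conj, ← Complex.ofReal_add,
        ← Complex.ofReal_add, ← Complex.ofReal_mul]
      refine Complex.zero_le_real.mpr ?_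
      have hbi : 0 ≤ b⁻¹ := le_of_lt (inv_pos.mpr hb)
      have := Complex.normSq_nonneg (x 1 - (b:ℂ) * Complex.exp (-((θ:ℂ) * Complex.I)) * x 3)
      have := Complex.normSq_nonneg (x 6 - (b:ℂ) * Complex.exp (-((θ:ℂ) * Complex.I)) * x 2)
      have := Complex.normSq_nonneg (x 5 - (b:ℂ) * Complex.exp (-((θ:ℂ) * Complex.I)) * x 7)
      positivity
    exact add_nonneg (add_nonneg (add_nonneg (h0 _ _ hp0) (h0 _ _ hp1)) (h0 _ _ hp2)) hB
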